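/- Pruning in of the SSSP search is sound: if, for node u and current set S, every node w with d(u,w) ≥ d(S,w) is excluded together with its entire shortest-path subtree, then the computed value Σ_{w visited} min(d(u,w), d(S,w)) + Σ_{w pruned} d(S,w) equals Σ_{w∈V} d(S∪{u}, w). -/

import Mathlib

/-- Soundness of SSSP pruning: if every pruned node `w` satisfies `d(S,w) ≤ d(u,w)`, then
`Σ_{w visited} min(d(u,w), d(S,w)) + Σ_{w pruned} d(S,w) = Σ_{w∈V} d(S∪{u},w)`. -/
theorem stmt12 {V : Type*} [Fintype V] [DecidableEq V] (G : SimpleGraph V) (hG : G.Connected)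
    (S : Finset V) (hS : S.Nonempty) (u : V) (P : Finset V)
    (hP : ∀ w ∈ P, S.inf' hS (fun s => G.dist s w) ≤ G.dist u w) :
    ∑ w ∈ Finset.univ \ P, min (G.dist u w) (S.inf' hS fun s => G.dist s w)
        + ∑ w ∈ P, S.inf' hS (fun s => G.dist s w)
      = ∑ w : V, (insert u S).inf' (Finset.insert_nonempty _ _) (fun s => G.dist s w) := by
  have key : ∀ w : V, (insert u S).inf' (Finset.insert_nonempty _ _) (fun s => G.dist s w)
      = min (G.dist u w) (S.inf' hS fun s => G.dist s w) := fun w =>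
    Finset.inf'_insert hS (fun s => G.dist s w)
  calc ∑ w ∈ Finset.univ \ P, min (G.dist u w) (S.inf' hS fun s => G.dist s w)
        + ∑ w ∈ P, S.inf' hS (fun s => G.dist s w)
      = ∑ w ∈ Finset.univ \ P, min (G.dist u w) (S.inf' hS fun s => G.dist s w)
        + ∑ w ∈ P, min (G.dist u w) (S.inf' hS fun s => G.dist s w) := by
        congr 1
        exact Finset.sum_congr rfl fun w hw => (min_eq_right (hP w hw)).symm
    _ = ∑ w : V, min (G.dist u w) (S.inf' hS fun s => G.dist s w) := by
        rw [Finset.sum_sdiff (Finset.subset_univ P)]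
    _ = ∑ w : V, (insert u S).inf' (Finset.insert_nonempty _ _) (fun s => G.dist s w) := by
        exact Finset.sum_congr rfl fun w _ => (key w).symm
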